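/- Let Σ be an n×n nonnegative matrix measure on ℝ. Let ρ₁ and ρ₂ be finite Borel measures on ℝ, each equivalent to Σ (i.e. for every Borel δ: ρᵢ(δ) = 0 ↔ Σ(δ) = 0), and let Ψ₁, Ψ₂ : ℝ → Matrix (Fin n) (Fin n) ℂ be Borel measurable densities, i.e. Σ(δ) = ∫_δ Ψᵢ(t) dρᵢ(t) for every Borel δ and i = 1,2. Then rank Ψ₁(t) = rank Ψ₂(t) for ρ₁-almost every t. In particular the multiplicity function N_Σ(t) := rank (dΣ/dρ)(t) is well defined up to Σ-null sets, independently of the choice of the equivalent scalar measure ρ and of the density. -/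

import Mathlib

open MeasureTheory
open scoped ComplexOrder ENNReal NNReal

lemma matrix_rank_smul_eq {n : ℕ} (c : ℂ) (hc : c ≠ 0) (A : Matrix (Fin n) (Fin n) ℂ) :
    (c • A).rank = A.rank := by
  have h : (c • A).mulVecLin = c • A.mulVecLin := by
    ext v i
    simp [Matrix.mulVecLin_apply, Matrix.smul_mulVec]
  unfold Matrix.rank
  rw [h, LinearMap.range_smul _ c hc]

/-- **Independence of the multiplicity function from all choices.**
If `ρ₁ ∼ S` and `ρ₂ ∼ S` are finite Borel measures equivalent to an `n × n`
nonnegative matrix measure `S`, and `Ψ₁`, `Ψ₂` are Borel measurable densities of `S`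
with respect to `ρ₁`, `ρ₂` respectively, then `rank Ψ₁(t) = rank Ψ₂(t)` for
`ρ₁`-almost every `t`; hence `N_S(t) := rank (dS/dρ)(t)` is well defined mod `S`. -/
theorem stmt_1 (n : ℕ)
    (S : VectorMeasure ℝ (Matrix (Fin n) (Fin n) ℂ))
    (hpos : ∀ δ : Set ℝ, MeasurableSet δ → (S δ).PosSemidef)
    (ρ₁ ρ₂ : Measure ℝ) [IsFiniteMeasure ρ₁] [IsFiniteMeasure ρ₂]
    (hequiv₁ : ∀ δ : Set ℝ, MeasurableSet δ → (ρ₁ δ = 0 ↔ S δ = 0))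
    (hequiv₂ : ∀ δ : Set ℝ, MeasurableSet δ → (ρ₂ δ = 0 ↔ S δ = 0))
    (Ψ₁ Ψ₂ : ℝ → Matrix (Fin n) (Fin n) ℂ)
    (hΨ₁ : ∀ i j, Measurable fun t => Ψ₁ t i j)
    (hΨ₂ : ∀ i j, Measurable fun t => Ψ₂ t i j)
    (hd₁ : ∀ δ : Set ℝ, MeasurableSet δ → ∀ i j, S δ i j = ∫ t in δ, Ψ₁ t i j ∂ρ₁)
    (hd₂ : ∀ δ : Set ℝ, MeasurableSet δ → ∀ i j, S δ i j = ∫ t in δ, Ψ₂ t i j ∂ρ₂) :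
    ∀ᵐ t ∂ρ₁, (Ψ₁ t).rank = (Ψ₂ t).rank := by
  -- mutual absolute continuity
  have hρ₂₁ : ρ₂ ≪ ρ₁ :=
    Measure.AbsolutelyContinuous.mk fun s hs h0 =>
      (hequiv₂ s hs).mpr ((hequiv₁ s hs).mp h0)
  have hρ₁₂ : ρ₁ ≪ ρ₂ :=
    Measure.AbsolutelyContinuous.mk fun s hs h0 =>
      (hequiv₁ s hs).mpr ((hequiv₂ s hs).mp h0)
  set f : ℝ → ℝ≥0∞ := ρ₂.rnDeriv ρ₁ with hf_def
  have hf_meas : Measurable f := Measure.measurable_rnDeriv ρ₂ ρ₁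
  have hwd : ρ₁.withDensity f = ρ₂ := Measure.withDensity_rnDeriv_eq ρ₂ ρ₁ hρ₂₁
  have hf_lt : ∀ᵐ t ∂ρ₁, f t < ∞ := Measure.rnDeriv_lt_top ρ₂ ρ₁
  have hf_pos : ∀ᵐ t ∂ρ₁, 0 < f t := hρ₁₂.ae_le (Measure.rnDeriv_pos hρ₂₁)
  set g : ℝ → ℝ≥0 := fun t => (f t).toNNReal with hg_def
  have hg_meas : Measurable g := hf_meas.ennreal_toNNReal
  have hwd' : ρ₁.withDensity (fun t => (g t : ℝ≥0∞)) = ρ₂ := by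
    rw [← hwd]
    refine withDensity_congr_ae ?_
    filter_upwards [hf_lt] with t ht
    simp [hg_def, ENNReal.coe_toNNReal ht.ne]
  -- exhausting sets on which everything is bounded
  set B : ℕ → Set ℝ := fun k =>
    (⋂ i, ⋂ j, {t | ‖Ψ₁ t i j‖ ≤ (k : ℝ)}) ∩
      (⋂ i, ⋂ j, {t | ‖Ψ₂ t i j‖ ≤ (k : ℝ)}) ∩ {t | (g t : ℝ) ≤ (k : ℝ)} with hB_def
  have hB : ∀ k, MeasurableSet (B k) := by
    intro k
    refine (MeasurableSet.inter (MeasurableSet.inter ?_ ?_) ?_)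
    · exact MeasurableSet.iInter fun i => MeasurableSet.iInter fun j =>
        measurableSet_le (hΨ₁ i j).norm measurable_const
    · exact MeasurableSet.iInter fun i => MeasurableSet.iInter fun j =>
        measurableSet_le (hΨ₂ i j).norm measurable_const
    · exact measurableSet_le (hg_meas.coe_nnreal_real) measurable_const
  have hB_cover : ∀ t, ∃ k, t ∈ B k := by
    intro t
    set M : ℝ := (∑ i, ∑ j, (‖Ψ₁ t i j‖ + ‖Ψ₂ t i j‖)) + (g t : ℝ) with hM_def
    obtain ⟨k, hk⟩ := exists_nat_ge M
    have hterm : ∀ i j, ‖Ψ₁ t i j‖ + ‖Ψ₂ t i j‖ ≤ ∑ i, ∑ j, (‖Ψ₁ t i j‖ + ‖Ψ₂ t i j‖) := by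
      intro i j
      calc ‖Ψ₁ t i j‖ + ‖Ψ₂ t i j‖
          ≤ ∑ j, (‖Ψ₁ t i j‖ + ‖Ψ₂ t i j‖) :=
            Finset.single_le_sum (f := fun j => ‖Ψ₁ t i j‖ + ‖Ψ₂ t i j‖)
              (fun j _ => by positivity) (Finset.mem_univ j)
        _ ≤ ∑ i, ∑ j, (‖Ψ₁ t i j‖ + ‖Ψ₂ t i j‖) :=
            Finset.single_le_sum (f := fun i => ∑ j, (‖Ψ₁ t i j‖ + ‖Ψ₂ t i j‖))
              (fun i _ => Finset.sum_nonneg fun j _ => by positivity) (Finset.mem_univ i)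
    have hsum_nonneg : (0:ℝ) ≤ ∑ i, ∑ j, (‖Ψ₁ t i j‖ + ‖Ψ₂ t i j‖) :=
      Finset.sum_nonneg fun i _ => Finset.sum_nonneg fun j _ => by positivity
    refine ⟨k, ⟨⟨?_, ?_⟩, ?_⟩⟩
    · refine Set.mem_iInter.2 fun i => Set.mem_iInter.2 fun j => ?_
      have h1 : ‖Ψ₁ t i j‖ ≤ M := by
        have h0 : ‖Ψ₁ t i j‖ ≤ ∑ i, ∑ j, (‖Ψ₁ t i j‖ + ‖Ψ₂ t i j‖) :=
          le_trans (le_add_of_nonneg_right (norm_nonneg _)) (hterm i j)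
        have := (g t).coe_nonneg
        simp only [hM_def]; linarith
      exact le_trans h1 hk
    · refine Set.mem_iInter.2 fun i => Set.mem_iInter.2 fun j => ?_
      have h1 : ‖Ψ₂ t i j‖ ≤ M := by
        have h0 : ‖Ψ₂ t i j‖ ≤ ∑ i, ∑ j, (‖Ψ₁ t i j‖ + ‖Ψ₂ t i j‖) :=
          le_trans (le_add_of_nonneg_left (norm_nonneg _)) (hterm i j)
        have := (g t).coe_nonneg
        simp only [hM_def]; linarith
      exact le_trans h1 hk
    · refine le_trans (le_trans ?_ hk) le_rfl
      simp only [hM_def]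
      exact le_add_of_nonneg_left hsum_nonneg
  -- the key entrywise identity
  have key : ∀ i j, (fun t => Ψ₁ t i j) =ᵐ[ρ₁] fun t => (g t : ℝ) • Ψ₂ t i j := by
    intro i j
    have hstep : ∀ k : ℕ, ∀ᵐ t ∂ρ₁, t ∈ B k → Ψ₁ t i j = (g t : ℝ) • Ψ₂ t i j := by
      intro k
      have hmem : ∀ᵐ t ∂(ρ₁.restrict (B k)), t ∈ B k := ae_restrict_mem (hB k)
      have hint₁ : Integrable (fun t => Ψ₁ t i j) (ρ₁.restrict (B k)) := by
        refine (integrable_const ((k : ℝ))).mono' (hΨ₁ i j).aestronglyMeasurable ?_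
        filter_upwards [hmem] with t ht
        exact Set.mem_iInter.1 (Set.mem_iInter.1 ht.1.1 i) j
      have hmeas₂ : Measurable fun t => (g t : ℝ) • Ψ₂ t i j := by
        have : Measurable fun t => ((g t : ℝ) : ℂ) := by
          exact Complex.measurable_ofReal.comp hg_meas.coe_nnreal_real
        simpa [Complex.real_smul] using (by have h2 : Measurable fun t => ((g t : ℝ) : ℂ) * Ψ₂ t i j := this.mul (hΨ₂ i j); exact h2)
      have hint₂ : Integrable (fun t => (g t : ℝ) • Ψ₂ t i j) (ρ₁.restrict (B k)) := by
        refine (integrable_const ((k : ℝ) * (k : ℝ))).mono' hmeas₂.aestronglyMeasurable ?_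
        filter_upwards [hmem] with t ht
        have h2 : ‖Ψ₂ t i j‖ ≤ (k : ℝ) := Set.mem_iInter.1 (Set.mem_iInter.1 ht.1.2 i) j
        have hgk : (g t : ℝ) ≤ (k : ℝ) := ht.2
        have : ‖(g t : ℝ) • Ψ₂ t i j‖ = (g t : ℝ) * ‖Ψ₂ t i j‖ := by
          rw [norm_smul, Real.norm_eq_abs, abs_of_nonneg (g t).coe_nonneg]
        rw [this]
        exact mul_le_mul hgk h2 (norm_nonneg _) (by positivity)
      have heq : (fun t => Ψ₁ t i j) =ᵐ[ρ₁.restrict (B k)]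
          fun t => (g t : ℝ) • Ψ₂ t i j := by
        refine ae_eq_of_forall_setIntegral_eq_of_sigmaFinite
          (fun s hs _ => hint₁.integrableOn) (fun s hs _ => hint₂.integrableOn) ?_
        intro s hs _
        rw [Measure.restrict_restrict hs]
        have hsB : MeasurableSet (s ∩ B k) := hs.inter (hB k)
        have e1 : ∫ t in s ∩ B k, Ψ₁ t i j ∂ρ₁ = S (s ∩ B k) i j := (hd₁ _ hsB i j).symm
        have e2 : S (s ∩ B k) i j = ∫ t in s ∩ B k, Ψ₂ t i j ∂ρ₂ := hd₂ _ hsB i j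
        have e3 : ∫ t in s ∩ B k, Ψ₂ t i j ∂ρ₂
            = ∫ t in s ∩ B k, (g t : ℝ) • Ψ₂ t i j ∂ρ₁ := by
          rw [← hwd', setIntegral_withDensity_eq_setIntegral_smul hg_meas _ hsB]
          refine setIntegral_congr_fun hsB fun t _ => ?_
          simp [NNReal.smul_def]
        rw [e1, e2, e3]
      exact (ae_restrict_iff' (hB k)).mp heq
    have hall : ∀ᵐ t ∂ρ₁, ∀ k : ℕ, t ∈ B k → Ψ₁ t i j = (g t : ℝ) • Ψ₂ t i j :=
      ae_all_iff.mpr hstep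
    filter_upwards [hall] with t ht
    obtain ⟨k, hk⟩ := hB_cover t
    exact ht k hk
  have key' : ∀ᵐ t ∂ρ₁, ∀ i j, Ψ₁ t i j = (g t : ℝ) • Ψ₂ t i j := by
    rw [ae_all_iff]
    intro i
    rw [ae_all_iff]
    intro j
    exact key i j
  filter_upwards [key', hf_pos, hf_lt] with t ht hpos' hlt
  have hgt : (g t : ℝ) ≠ 0 := by
    have : g t ≠ 0 := by
      simp only [hg_def, ne_eq, ENNReal.toNNReal_eq_zero_iff]
      push_neg
      exact ⟨hpos'.ne', hlt.ne⟩
    exact_mod_cast this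
  have hc : ((g t : ℝ) : ℂ) ≠ 0 := by exact_mod_cast hgt
  have hmat : Ψ₁ t = ((g t : ℝ) : ℂ) • Ψ₂ t := by
    ext i j
    rw [ht i j]
    simp [Complex.real_smul]
  rw [hmat, matrix_rank_smul_eq _ hc]
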